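/- The map v_S ↦ |λ_S, s⟩, induced by the bijection between l-symbols of charge s and l-partitions, is an isomorphism of U_q(sl_∞)-modules between the tensor product Fock space F'_s = V(Λ_{s_1}) ⊗ ··· ⊗ V(Λ_{s_l}) and the combinatorial Fock space F_s with basis the l-partitions and action given by the Jimbo–Misra–Miwa–Okado formulas. -/

import Mathlib

open scoped BigOperators

/-- A partition: a weakly decreasing sequence of non-negative integers, eventually zero.
`part i` is the `(i+1)`-st part. -/
structure PartitionSeq where
  part : ℕ → ℕ
  antitone : ∀ i j : ℕ, i ≤ j → part j ≤ part i
  eventually_zero : ∃ N : ℕ, ∀ i : ℕ, N ≤ i → part i = 0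

/-- The Young diagram of an `l`-partition: boxes `(a, b, c)` with `a, b ≥ 1` and
`b ≤ λ^{(c)}_a`. -/
def YDiag {l : ℕ} (lam : Fin l → PartitionSeq) : Set (ℕ × ℕ × Fin l) :=
  {x | 1 ≤ x.1 ∧ 1 ≤ x.2.1 ∧ x.2.1 ≤ (lam x.2.2).part (x.1 - 1)}

/-- A box `γ` of `[λ]` is removable if `[λ] \ {γ}` is again the Young diagram of an
`l`-partition. -/
def Removable {l : ℕ} (lam : Fin l → PartitionSeq) (γ : ℕ × ℕ × Fin l) : Prop :=
  γ ∈ YDiag lam ∧ ∃ mu : Fin l → PartitionSeq, YDiag mu = YDiag lam \ {γ}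

/-- A box `γ ∉ [λ]` is addable if `[λ] ∪ {γ}` is again the Young diagram of an
`l`-partition. -/
def Addable {l : ℕ} (lam : Fin l → PartitionSeq) (γ : ℕ × ℕ × Fin l) : Prop :=
  γ ∉ YDiag lam ∧ ∃ mu : Fin l → PartitionSeq, YDiag mu = insert γ (YDiag lam)

/-- The charged content `b - a + s_c` of a box `(a, b, c)` relative to the charge `s`. -/
def content {l : ℕ} (s : Fin l → ℤ) (γ : ℕ × ℕ × Fin l) : ℤ :=
  (γ.2.1 : ℤ) - (γ.1 : ℤ) + s γ.2.2
/-- An `l`-symbol of charge `s`: an `l`-tuple of strictly increasing integer sequences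
`β_k = (β_{k,j})_{j ≤ s_k}` with `β_{k,j} = j` for `j ≪ 0`. -/
structure LSymbol (l : ℕ) (s : Fin l → ℤ) where
  β : (k : Fin l) → {j : ℤ // j ≤ s k} → ℤ
  strict : ∀ k : Fin l, StrictMono (β k)
  lower : ∀ k : Fin l, ∃ N : ℤ, ∀ j : {j : ℤ // j ≤ s k}, j.val ≤ N → β k j = j.val

noncomputable section

open Classical

/-- `N_i^≻(λ, γ)`: number of addable minus removable boxes of `λ` of charged content `i`
in a component strictly after that of `γ`. -/
def Nsucc {l : ℕ} (s : Fin l → ℤ) (lam : Fin l → PartitionSeq)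
    (γ : ℕ × ℕ × Fin l) (i : ℤ) : ℤ :=
  ({γ' : ℕ × ℕ × Fin l | Addable lam γ' ∧ content s γ' = i ∧ γ.2.2 < γ'.2.2}.ncard : ℤ) -
    ({γ' : ℕ × ℕ × Fin l | Removable lam γ' ∧ content s γ' = i ∧ γ.2.2 < γ'.2.2}.ncard : ℤ)

/-- `N_i^≺(λ, γ)`: number of addable minus removable boxes of `λ` of charged content `i`
in a component strictly before that of `γ`. -/
def Nprec {l : ℕ} (s : Fin l → ℤ) (lam : Fin l → PartitionSeq)
    (γ : ℕ × ℕ × Fin l) (i : ℤ) : ℤ :=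
  ({γ' : ℕ × ℕ × Fin l | Addable lam γ' ∧ content s γ' = i ∧ γ'.2.2 < γ.2.2}.ncard : ℤ) -
    ({γ' : ℕ × ℕ × Fin l | Removable lam γ' ∧ content s γ' = i ∧ γ'.2.2 < γ.2.2}.ncard : ℤ)

/-- `N_i(λ)`: total number of addable minus removable boxes of `λ` of charged content `i`. -/
def Ntot {l : ℕ} (s : Fin l → ℤ) (lam : Fin l → PartitionSeq) (i : ℤ) : ℤ :=
  ({γ' : ℕ × ℕ × Fin l | Addable lam γ' ∧ content s γ' = i}.ncard : ℤ) -
    ({γ' : ℕ × ℕ × Fin l | Removable lam γ' ∧ content s γ' = i}.ncard : ℤ)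

/-- The JMMO operator `F_i` on the level `l` combinatorial Fock space:
`F_i |λ⟩ = Σ_μ q^{N_i^≻(λ, γ)} |μ⟩`, over `μ` with `[μ] = [λ] ∪ {γ}`, `γ` of charged
content `i`. -/
def FockF (l : ℕ) (s : Fin l → ℤ) (i : ℤ) :
    ((Fin l → PartitionSeq) →₀ RatFunc ℚ) →ₗ[RatFunc ℚ]
      ((Fin l → PartitionSeq) →₀ RatFunc ℚ) :=
  Finsupp.lsum (RatFunc ℚ) fun lam =>
    ∑ c : Fin l,
      if h : ∃ p : (ℕ × ℕ × Fin l) × (Fin l → PartitionSeq),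
          p.1.2.2 = c ∧ content s p.1 = i ∧ p.1 ∉ YDiag lam ∧
            YDiag p.2 = insert p.1 (YDiag lam) then
        ((RatFunc.X : RatFunc ℚ) ^ (Nsucc s lam h.choose.1 i)) •
          (Finsupp.lsingle h.choose.2 :
            RatFunc ℚ →ₗ[RatFunc ℚ] (Fin l → PartitionSeq) →₀ RatFunc ℚ)
      else 0

/-- The JMMO operator `E_i` on the level `l` combinatorial Fock space:
`E_i |λ⟩ = Σ_μ q^{-N_i^≺(μ, γ)} |μ⟩`, over `μ` with `[λ] = [μ] ∪ {γ}`, `γ` of charged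
content `i`. -/
def FockE (l : ℕ) (s : Fin l → ℤ) (i : ℤ) :
    ((Fin l → PartitionSeq) →₀ RatFunc ℚ) →ₗ[RatFunc ℚ]
      ((Fin l → PartitionSeq) →₀ RatFunc ℚ) :=
  Finsupp.lsum (RatFunc ℚ) fun lam =>
    ∑ c : Fin l,
      if h : ∃ p : (ℕ × ℕ × Fin l) × (Fin l → PartitionSeq),
          p.1.2.2 = c ∧ content s p.1 = i ∧ p.1 ∉ YDiag p.2 ∧
            YDiag lam = insert p.1 (YDiag p.2) then
        ((RatFunc.X : RatFunc ℚ) ^ (-(Nprec s h.choose.2 h.choose.1 i))) •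
          (Finsupp.lsingle h.choose.2 :
            RatFunc ℚ →ₗ[RatFunc ℚ] (Fin l → PartitionSeq) →₀ RatFunc ℚ)
      else 0

/-- The JMMO operator `K_i`: `K_i |λ⟩ = q^{N_i(λ)} |λ⟩`. -/
def FockK (l : ℕ) (s : Fin l → ℤ) (i : ℤ) :
    ((Fin l → PartitionSeq) →₀ RatFunc ℚ) →ₗ[RatFunc ℚ]
      ((Fin l → PartitionSeq) →₀ RatFunc ℚ) :=
  Finsupp.lsum (RatFunc ℚ) fun lam =>
    ((RatFunc.X : RatFunc ℚ) ^ (Ntot s lam i)) •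
      (Finsupp.lsingle lam :
        RatFunc ℚ →ₗ[RatFunc ℚ] (Fin l → PartitionSeq) →₀ RatFunc ℚ)

/-- Whether the integer `x` appears in the `k`-th row of the symbol `S`. -/
def inRow {l : ℕ} {s : Fin l → ℤ} (S : LSymbol l s) (k : Fin l) (x : ℤ) : Prop :=
  ∃ j, S.β k j = x

/-- The diagonal coefficient of `K_i` on the `k`-th tensor factor of `v_S`. -/
def KcoefS {l : ℕ} {s : Fin l → ℤ} (i : ℤ) (S : LSymbol l s) (k : Fin l) : RatFunc ℚ :=
  if inRow S k i ∧ ¬ inRow S k (i + 1) then RatFunc.X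
  else if ¬ inRow S k i ∧ inRow S k (i + 1) then RatFunc.X⁻¹
  else 1

/-- The operator `F_i` on the tensor product Fock space
`F'_s = V(Λ_{s_1}) ⊗ ⋯ ⊗ V(Λ_{s_l})` (basis indexed by `l`-symbols), obtained from the
iterated coproduct `Δ(F_i) = F_i ⊗ K_i + 1 ⊗ F_i`: the term acting on the `k`-th factor
moves `i` to `i+1` in row `k` and multiplies by the `K_i`-eigenvalues of the later rows. -/
def SymF (l : ℕ) (s : Fin l → ℤ) (i : ℤ) :
    (LSymbol l s →₀ RatFunc ℚ) →ₗ[RatFunc ℚ] (LSymbol l s →₀ RatFunc ℚ) :=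
  Finsupp.lsum (RatFunc ℚ) fun S =>
    ∑ k : Fin l,
      if h : (inRow S k i ∧ ¬ inRow S k (i + 1)) ∧
          ∃ T : LSymbol l s, (∀ k' : Fin l, k' ≠ k → T.β k' = S.β k') ∧
            ∀ j, T.β k j = if S.β k j = i then i + 1 else S.β k j then
        (∏ k' ∈ Finset.univ.filter (fun k' : Fin l => k < k'), KcoefS i S k') •
          (Finsupp.lsingle h.2.choose :
            RatFunc ℚ →ₗ[RatFunc ℚ] LSymbol l s →₀ RatFunc ℚ)
      else 0

/-- The operator `E_i` on the tensor product Fock space, from the iterated coproduct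
`Δ(E_i) = E_i ⊗ 1 + K_i⁻¹ ⊗ E_i`: the term acting on the `k`-th factor moves `i+1` to `i`
in row `k` and multiplies by the inverse `K_i`-eigenvalues of the earlier rows. -/
def SymE (l : ℕ) (s : Fin l → ℤ) (i : ℤ) :
    (LSymbol l s →₀ RatFunc ℚ) →ₗ[RatFunc ℚ] (LSymbol l s →₀ RatFunc ℚ) :=
  Finsupp.lsum (RatFunc ℚ) fun S =>
    ∑ k : Fin l,
      if h : (inRow S k (i + 1) ∧ ¬ inRow S k i) ∧
          ∃ T : LSymbol l s, (∀ k' : Fin l, k' ≠ k → T.β k' = S.β k') ∧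
            ∀ j, T.β k j = if S.β k j = i + 1 then i else S.β k j then
        (∏ k' ∈ Finset.univ.filter (fun k' : Fin l => k' < k), (KcoefS i S k')⁻¹) •
          (Finsupp.lsingle h.2.choose :
            RatFunc ℚ →ₗ[RatFunc ℚ] LSymbol l s →₀ RatFunc ℚ)
      else 0

/-- The operator `K_i` on the tensor product Fock space: `K_i v_S = (∏_k κ_k) v_S`. -/
def SymK (l : ℕ) (s : Fin l → ℤ) (i : ℤ) :
    (LSymbol l s →₀ RatFunc ℚ) →ₗ[RatFunc ℚ] (LSymbol l s →₀ RatFunc ℚ) :=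
  Finsupp.lsum (RatFunc ℚ) fun S =>
    (∏ k : Fin l, KcoefS i S k) •
      (Finsupp.lsingle S : RatFunc ℚ →ₗ[RatFunc ℚ] LSymbol l s →₀ RatFunc ℚ)

end

section Comb

open Classical

lemma PartitionSeq.ext' {p q : PartitionSeq} (h : ∀ n, p.part n = q.part n) : p = q := by
  cases p; cases q; simp only [PartitionSeq.mk.injEq]; exact funext h

lemma mem_YDiag_iff {l : ℕ} (lam : Fin l → PartitionSeq) (a b : ℕ) (c : Fin l) :
    (a, b, c) ∈ YDiag lam ↔ 1 ≤ a ∧ 1 ≤ b ∧ b ≤ (lam c).part (a - 1) := Iff.rfl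

private lemma bound_eq {x y : ℕ} (h : ∀ b : ℕ, 1 ≤ b → (b ≤ x ↔ b ≤ y)) : x = y := by
  have h1 := h x; have h2 := h y; omega

lemma YDiag_inj {l : ℕ} {lam mu : Fin l → PartitionSeq} (h : YDiag lam = YDiag mu) :
    lam = mu := by
  funext c
  apply PartitionSeq.ext'
  intro n
  apply bound_eq
  intro b hb
  have := Set.ext_iff.1 h (n + 1, b, c)
  simp only [mem_YDiag_iff, Nat.add_sub_cancel] at this
  omega

/-- The partition `p` with one box added at the end of (0-indexed) row `n0`, if possible. -/
def addP (p : PartitionSeq) (n0 : ℕ) : PartitionSeq where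
  part n := if n = n0 ∧ (n0 = 0 ∨ p.part n0 < p.part (n0 - 1)) then p.part n0 + 1 else p.part n
  antitone := by
    intro i j hij
    by_cases hj : j = n0 ∧ (n0 = 0 ∨ p.part n0 < p.part (n0 - 1))
    · rw [if_pos hj]
      by_cases hi : i = n0 ∧ (n0 = 0 ∨ p.part n0 < p.part (n0 - 1))
      · rw [if_pos hi]
      · rw [if_neg hi]
        obtain ⟨hj1, hj2⟩ := hj
        have hi' : i ≠ n0 := fun h => hi ⟨h, hj2⟩
        have h2 := p.antitone i (n0 - 1) (by omega)
        rcases hj2 with h0 | h0 <;> omega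
    · rw [if_neg hj]
      by_cases hi : i = n0 ∧ (n0 = 0 ∨ p.part n0 < p.part (n0 - 1))
      · rw [if_pos hi]
        have h2 := p.antitone i j hij
        rw [hi.1] at h2
        omega
      · rw [if_neg hi]; exact p.antitone i j hij
  eventually_zero := by
    obtain ⟨N, hN⟩ := p.eventually_zero
    refine ⟨max N (n0 + 1), fun i hi => ?_⟩
    rw [if_neg (by omega), hN i (by omega)]

/-- `AddPair lam γ mu` : `mu` is obtained from `lam` by adding the box `γ`. -/
def AddPair {l : ℕ} (lam : Fin l → PartitionSeq) (γ : ℕ × ℕ × Fin l)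
    (mu : Fin l → PartitionSeq) : Prop :=
  γ ∉ YDiag lam ∧ YDiag mu = insert γ (YDiag lam)

lemma addPair_iff {l : ℕ} (lam mu : Fin l → PartitionSeq) (a b : ℕ) (c : Fin l) :
    AddPair lam (a, b, c) mu ↔
      1 ≤ a ∧ b = (lam c).part (a - 1) + 1 ∧
        (a - 1 = 0 ∨ (lam c).part (a - 1) < (lam c).part (a - 2)) ∧
        mu = Function.update lam c (addP (lam c) (a - 1)) := by
  constructor
  · rintro ⟨hnot, heq⟩
    have hmem : (a, b, c) ∈ YDiag mu := by rw [heq]; exact Set.mem_insert _ _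
    rw [mem_YDiag_iff] at hmem
    obtain ⟨ha, hb, hble⟩ := hmem
    have hiff : ∀ a' b' : ℕ, ∀ c' : Fin l, ¬(a' = a ∧ b' = b ∧ c' = c) →
        ((a' , b', c') ∈ YDiag mu ↔ (a', b', c') ∈ YDiag lam) := by
      intro a' b' c' hne
      rw [heq, Set.mem_insert_iff]
      have : (a', b', c') ≠ (a, b, c) := by simp only [ne_eq, Prod.mk.injEq]; tauto
      simp [this]
    have hcomp : ∀ c' : Fin l, c' ≠ c → ∀ n, (mu c').part n = (lam c').part n := by
      intro c' hc' n
      apply bound_eq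
      intro b' hb'
      have := hiff (n + 1) b' c' (by tauto)
      simp only [mem_YDiag_iff, Nat.add_sub_cancel] at this
      omega
    have hrow : ∀ n, n ≠ a - 1 → (mu c).part n = (lam c).part n := by
      intro n hn
      apply bound_eq
      intro b' hb'
      have := hiff (n + 1) b' c (by intro hcc; omega)
      simp only [mem_YDiag_iff, Nat.add_sub_cancel] at this
      omega
    have hlam_lt : (lam c).part (a - 1) < b := by
      by_contra hcon
      exact hnot (by rw [mem_YDiag_iff]; omega)
    have hlam_row : (lam c).part (a - 1) = b - 1 := by
      rcases Nat.eq_or_lt_of_le hb with hb1 | hb1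
      · omega
      · have := (hiff a (b - 1) c (by intro hcc; omega)).1 (by rw [mem_YDiag_iff]; omega)
        rw [mem_YDiag_iff] at this
        omega
    have hmu_row : (mu c).part (a - 1) = b := by
      rcases Nat.eq_or_lt_of_le hble with h' | h'
      · omega
      · have := (hiff a (b + 1) c (by intro hcc; omega)).1 (by rw [mem_YDiag_iff]; omega)
        rw [mem_YDiag_iff] at this
        omega
    have hcond : a - 1 = 0 ∨ (lam c).part (a - 1) < (lam c).part (a - 2) := by
      by_cases ha1 : a - 1 = 0
      · left; exact ha1
      · right
        have h2 := hrow (a - 2) (by omega)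
        have h3 := (mu c).antitone (a - 2) (a - 1) (by omega)
        omega
    refine ⟨ha, by omega, hcond, ?_⟩
    funext c'
    by_cases hc' : c' = c
    · subst hc'
      rw [Function.update_self]
      apply PartitionSeq.ext'
      intro n
      show (mu c').part n =
        if n = a - 1 ∧ (a - 1 = 0 ∨ (lam c').part (a - 1) < (lam c').part (a - 1 - 1))
        then (lam c').part (a - 1) + 1 else (lam c').part n
      by_cases hn : n = a - 1
      · subst hn
        rw [if_pos ⟨rfl, by simp only [show a - 1 - 1 = a - 2 by omega]; omega⟩]
        omega
      · rw [if_neg (fun hh => hn hh.1), hrow n hn]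
    · rw [Function.update_of_ne hc']
      exact PartitionSeq.ext' (hcomp c' hc')
  · rintro ⟨ha, hb, hcond, hmu⟩
    subst hmu
    constructor
    · rw [mem_YDiag_iff]; omega
    · ext ⟨a', b', c'⟩
      rw [mem_YDiag_iff, Set.mem_insert_iff, mem_YDiag_iff]
      by_cases hc' : c' = c
      · subst hc'
        rw [Function.update_self]
        show (1 ≤ a' ∧ 1 ≤ b' ∧ b' ≤
            if a' - 1 = a - 1 ∧ (a - 1 = 0 ∨ (lam c').part (a - 1) < (lam c').part (a - 1 - 1))
            then (lam c').part (a - 1) + 1 else (lam c').part (a' - 1)) ↔ _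
        by_cases ha' : a' = a
        · subst ha'
          rw [if_pos ⟨rfl, by simp only [show a' - 1 - 1 = a' - 2 by omega]; omega⟩]
          simp only [Prod.mk.injEq, and_true, true_and]
          omega
        · by_cases ha0 : a' = 0
          · subst ha0
            constructor
            · rintro ⟨h1, -⟩; omega
            · rintro (⟨h1, -⟩ | ⟨h1, -⟩) <;> omega
          · rw [if_neg (fun h => ha' (by have := h.1; omega))]
            simp only [Prod.mk.injEq]
            constructor
            · intro h; right; exact h
            · rintro (⟨h1, -⟩ | h) 
              · omega
              · exact h
      · rw [Function.update_of_ne hc']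
        simp only [Prod.mk.injEq]
        have hne : ¬ (a' = a ∧ b' = b ∧ c' = c) := by tauto
        tauto

/-- The partition `p` with the last box of (0-indexed) row `n0` removed, if possible. -/
def remP (p : PartitionSeq) (n0 : ℕ) : PartitionSeq where
  part n := if n = n0 ∧ p.part (n0 + 1) < p.part n0 then p.part n0 - 1 else p.part n
  antitone := by
    intro i j hij
    by_cases hj : j = n0 ∧ p.part (n0 + 1) < p.part n0
    · rw [if_pos hj]
      by_cases hi : i = n0 ∧ p.part (n0 + 1) < p.part n0
      · rw [if_pos hi]
      · rw [if_neg hi]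
        have h2 := p.antitone i n0 (by rcases hj with ⟨rfl, -⟩; exact hij)
        omega
    · rw [if_neg hj]
      by_cases hi : i = n0 ∧ p.part (n0 + 1) < p.part n0
      · rw [if_pos hi]
        obtain ⟨rfl, hlt⟩ := hi
        have hj' : i ≠ j := by rintro rfl; exact hj ⟨rfl, hlt⟩
        have h2 := p.antitone (i + 1) j (by omega)
        omega
      · rw [if_neg hi]; exact p.antitone i j hij
  eventually_zero := by
    obtain ⟨N, hN⟩ := p.eventually_zero
    refine ⟨max N (n0 + 1), fun i hi => ?_⟩
    rw [if_neg (fun h => by omega), hN i (by omega)]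

lemma addable_iff_addpair {l : ℕ} (lam : Fin l → PartitionSeq) (γ : ℕ × ℕ × Fin l) :
    Addable lam γ ↔ ∃ mu, AddPair lam γ mu := by
  unfold Addable AddPair
  tauto

lemma removable_iff_addpair {l : ℕ} (lam : Fin l → PartitionSeq) (γ : ℕ × ℕ × Fin l) :
    Removable lam γ ↔ ∃ mu, AddPair mu γ lam := by
  constructor
  · rintro ⟨hmem, mu, hmu⟩
    refine ⟨mu, ?_, ?_⟩
    · rw [hmu]; simp
    · rw [hmu, Set.insert_diff_singleton, Set.insert_eq_of_mem hmem]
  · rintro ⟨mu, hnot, heq⟩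
    refine ⟨by rw [heq]; exact Set.mem_insert _ _, mu, ?_⟩
    rw [heq, Set.insert_diff_self_of_notMem hnot]

lemma addable_char {l : ℕ} (lam : Fin l → PartitionSeq) (a b : ℕ) (c : Fin l) :
    Addable lam (a, b, c) ↔
      1 ≤ a ∧ b = (lam c).part (a - 1) + 1 ∧
        (a - 1 = 0 ∨ (lam c).part (a - 1) < (lam c).part (a - 2)) := by
  rw [addable_iff_addpair]
  constructor
  · rintro ⟨mu, h⟩
    obtain ⟨h1, h2, h3, -⟩ := (addPair_iff lam mu a b c).1 h
    exact ⟨h1, h2, h3⟩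
  · rintro ⟨h1, h2, h3⟩
    exact ⟨_, (addPair_iff lam _ a b c).2 ⟨h1, h2, h3, rfl⟩⟩

lemma removable_char {l : ℕ} (lam : Fin l → PartitionSeq) (a b : ℕ) (c : Fin l) :
    Removable lam (a, b, c) ↔
      1 ≤ a ∧ 1 ≤ b ∧ b = (lam c).part (a - 1) ∧ (lam c).part a < b := by
  rw [removable_iff_addpair]
  constructor
  · rintro ⟨mu, h⟩
    obtain ⟨h1, h2, h3, h4⟩ := (addPair_iff mu lam a b c).1 h
    have hlc : lam c = addP (mu c) (a - 1) := by rw [h4, Function.update_self]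
    have hr1 : (lam c).part (a - 1) = (mu c).part (a - 1) + 1 := by
      rw [hlc]; show (if _ ∧ _ then _ else _) = _; rw [if_pos ⟨rfl, h3⟩]
    have hr2 : (lam c).part a = (mu c).part a := by
      rw [hlc]; show (if _ ∧ _ then _ else _) = _; rw [if_neg (fun h => by omega)]
    have hr3 := (mu c).antitone (a - 1) a (by omega)
    exact ⟨h1, by omega, by omega, by omega⟩
  · rintro ⟨h1, h2, h3, h4⟩
    set mu := Function.update lam c (remP (lam c) (a - 1)) with hmu
    have hcond : (lam c).part (a - 1 + 1) < (lam c).part (a - 1) := by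
      have := (lam c).antitone a (a - 1 + 1) (by omega)
      omega
    have hmuc : mu c = remP (lam c) (a - 1) := by rw [hmu, Function.update_self]
    have hm1 : (mu c).part (a - 1) = b - 1 := by
      rw [hmuc]; show (if _ ∧ _ then _ else _) = _; rw [if_pos ⟨rfl, hcond⟩]; omega
    have hm2 : ∀ n, n ≠ a - 1 → (mu c).part n = (lam c).part n := by
      intro n hn
      rw [hmuc]; show (if _ ∧ _ then _ else _) = _; rw [if_neg (fun h => hn h.1)]
    refine ⟨mu, (addPair_iff mu lam a b c).2 ⟨h1, by omega, ?_, ?_⟩⟩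
    · by_cases ha1 : a - 1 = 0
      · left; exact ha1
      · right
        have h5 := hm2 (a - 2) (by omega)
        have h6 := (lam c).antitone (a - 2) (a - 1) (by omega)
        omega
    · funext c'
      by_cases hc' : c' = c
      · subst hc'
        rw [Function.update_self]
        apply PartitionSeq.ext'
        intro n
        have hcond' : a - 1 = 0 ∨ (mu c').part (a - 1) < (mu c').part (a - 1 - 1) := by
          by_cases ha1 : a - 1 = 0
          · left; exact ha1
          · right
            have h5 := hm2 (a - 1 - 1) (by omega)
            have h6 := (lam c').antitone (a - 1 - 1) (a - 1) (by omega)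
            omega
        show (lam c').part n = if n = a - 1 ∧ _ then (mu c').part (a - 1) + 1 else (mu c').part n
        by_cases hn : n = a - 1
        · subst hn; rw [if_pos ⟨rfl, hcond'⟩]; omega
        · rw [if_neg (fun h => hn h.1), hm2 n hn]
      · rw [hmu, Function.update_of_ne hc', Function.update_of_ne hc']

/-- `x` is a value of `n ↦ p.part n - n` (a "beta-number" shifted). -/
def Grange (p : PartitionSeq) (x : ℤ) : Prop := ∃ n : ℕ, (p.part n : ℤ) - n = x

lemma g_inj (p : PartitionSeq) {m n : ℕ}
    (h : (p.part m : ℤ) - m = (p.part n : ℤ) - n) : m = n := by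
  rcases Nat.lt_trichotomy m n with hlt | heq | hgt
  · have := p.antitone m n (by omega); omega
  · exact heq
  · have := p.antitone n m (by omega); omega

lemma exists_addable_iff {l : ℕ} (s : Fin l → ℤ) (lam : Fin l → PartitionSeq)
    (c : Fin l) (i : ℤ) :
    (∃ γ : ℕ × ℕ × Fin l, Addable lam γ ∧ content s γ = i ∧ γ.2.2 = c) ↔
      Grange (lam c) (i - s c) ∧ ¬ Grange (lam c) (i + 1 - s c) := by
  constructor
  · rintro ⟨⟨a, b, c'⟩, hAdd, hcont, hcc⟩
    obtain rfl : c' = c := hcc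
    obtain ⟨ha, hb, hcond⟩ := (addable_char lam a b c').1 hAdd
    have hcont' : (b : ℤ) - (a : ℤ) + s c' = i := hcont
    constructor
    · exact ⟨a - 1, by omega⟩
    · rintro ⟨m, hm⟩
      rcases Nat.lt_trichotomy m (a - 1) with hlt | heq | hgt
      · have h5 := (lam c').antitone m (a - 2) (by omega)
        have h6 : ¬ (a - 1 = 0) := by omega
        rcases hcond with h7 | h7 <;> omega
      · subst heq; omega
      · have h5 := (lam c').antitone (a - 1) m (by omega)
        omega

  · rintro ⟨⟨n, hn⟩, hnot⟩
    have hcond : n = 0 ∨ (lam c).part n < (lam c).part (n - 1) := by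
      by_cases hn0 : n = 0
      · left; exact hn0
      · right
        have h5 := (lam c).antitone (n - 1) n (by omega)
        rcases Nat.lt_or_ge ((lam c).part n) ((lam c).part (n - 1)) with h | h
        · exact h
        · exact absurd ⟨n - 1, by omega⟩ hnot
    refine ⟨(n + 1, (lam c).part n + 1, c), (addable_char lam _ _ c).2 ?_, ?_, rfl⟩
    · refine ⟨by omega, by simp, ?_⟩
      simp only [Nat.add_sub_cancel, show n + 1 - 2 = n - 1 by omega]
      omega
    · show ((lam c).part n + 1 : ℤ) - ((n : ℕ) + 1 : ℕ) + s c = i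
      push_cast
      omega

lemma exists_removable_iff {l : ℕ} (s : Fin l → ℤ) (lam : Fin l → PartitionSeq)
    (c : Fin l) (i : ℤ) :
    (∃ γ : ℕ × ℕ × Fin l, Removable lam γ ∧ content s γ = i ∧ γ.2.2 = c) ↔
      ¬ Grange (lam c) (i - s c) ∧ Grange (lam c) (i + 1 - s c) := by
  constructor
  · rintro ⟨⟨a, b, c'⟩, hRem, hcont, hcc⟩
    obtain rfl : c' = c := hcc
    obtain ⟨ha, hb, hrow, hlt⟩ := (removable_char lam a b c').1 hRem
    have hcont' : (b : ℤ) - (a : ℤ) + s c' = i := hcont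
    constructor
    · rintro ⟨m, hm⟩
      rcases Nat.lt_trichotomy m (a - 1) with hlt' | heq | hgt
      · have h5 := (lam c').antitone m (a - 1) (by omega)
        omega
      · subst heq; omega
      · have h5 := (lam c').antitone a m (by omega)
        omega
    · exact ⟨a - 1, by omega⟩
  · rintro ⟨hnot, ⟨n, hn⟩⟩
    have hpos : 1 ≤ (lam c).part n := by
      by_contra h
      refine hnot ⟨n + 1, ?_⟩
      have h5 := (lam c).antitone n (n + 1) (by omega)
      push_cast
      omega
    have hlt : (lam c).part (n + 1) < (lam c).part n := by
      rcases Nat.lt_or_ge ((lam c).part (n + 1)) ((lam c).part n) with h | h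
      · exact h
      · have h5 := (lam c).antitone n (n + 1) (by omega)
        refine absurd ⟨n + 1, by push_cast; omega⟩ hnot
    refine ⟨(n + 1, (lam c).part n, c), (removable_char lam _ _ c).2 ?_, ?_, rfl⟩
    · exact ⟨by omega, hpos, by simp, hlt⟩
    · show ((lam c).part n : ℤ) - ((n : ℕ) + 1 : ℕ) + s c = i
      push_cast
      omega

lemma addable_unique {l : ℕ} (s : Fin l → ℤ) (lam : Fin l → PartitionSeq)
    {γ1 γ2 : ℕ × ℕ × Fin l} (h1 : Addable lam γ1) (h2 : Addable lam γ2)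
    (hc : content s γ1 = content s γ2) (hk : γ1.2.2 = γ2.2.2) : γ1 = γ2 := by
  obtain ⟨a1, b1, c1⟩ := γ1
  obtain ⟨a2, b2, c2⟩ := γ2
  simp only at hk
  subst hk
  obtain ⟨ha1, hb1, -⟩ := (addable_char lam a1 b1 c1).1 h1
  obtain ⟨ha2, hb2, -⟩ := (addable_char lam a2 b2 c1).1 h2
  have hc' : (b1 : ℤ) - a1 + s c1 = (b2 : ℤ) - a2 + s c1 := hc
  have : a1 - 1 = a2 - 1 := g_inj (lam c1) (by omega)
  have : a1 = a2 := by omega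
  subst this
  simp only [Prod.mk.injEq, true_and, and_true]
  omega

lemma removable_unique {l : ℕ} (s : Fin l → ℤ) (lam : Fin l → PartitionSeq)
    {γ1 γ2 : ℕ × ℕ × Fin l} (h1 : Removable lam γ1) (h2 : Removable lam γ2)
    (hc : content s γ1 = content s γ2) (hk : γ1.2.2 = γ2.2.2) : γ1 = γ2 := by
  obtain ⟨a1, b1, c1⟩ := γ1
  obtain ⟨a2, b2, c2⟩ := γ2
  simp only at hk
  subst hk
  obtain ⟨ha1, hp1, hb1, -⟩ := (removable_char lam a1 b1 c1).1 h1
  obtain ⟨ha2, hp2, hb2, -⟩ := (removable_char lam a2 b2 c1).1 h2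
  have hc' : (b1 : ℤ) - a1 + s c1 = (b2 : ℤ) - a2 + s c1 := hc
  have : a1 - 1 = a2 - 1 := g_inj (lam c1) (by omega)
  have : a1 = a2 := by omega
  subst this
  simp only [Prod.mk.injEq, true_and, and_true]
  omega

lemma ncard_addable_eq {l : ℕ} (s : Fin l → ℤ) (lam : Fin l → PartitionSeq) (i : ℤ)
    (P : Fin l → Prop) [DecidablePred P] :
    {γ' : ℕ × ℕ × Fin l | Addable lam γ' ∧ content s γ' = i ∧ P γ'.2.2}.ncard =
      (Finset.univ.filter (fun c : Fin l =>
        P c ∧ Grange (lam c) (i - s c) ∧ ¬ Grange (lam c) (i + 1 - s c))).card := by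
  set A := {γ' : ℕ × ℕ × Fin l | Addable lam γ' ∧ content s γ' = i ∧ P γ'.2.2} with hA
  have hinj : Set.InjOn (fun γ' : ℕ × ℕ × Fin l => γ'.2.2) A := by
    intro x hx y hy hxy
    exact addable_unique s lam hx.1 hy.1 (hx.2.1.trans hy.2.1.symm) hxy
  have himg : (fun γ' : ℕ × ℕ × Fin l => γ'.2.2) '' A = ↑(Finset.univ.filter (fun c : Fin l =>
      P c ∧ Grange (lam c) (i - s c) ∧ ¬ Grange (lam c) (i + 1 - s c))) := by
    ext c
    simp only [Set.mem_image, Finset.coe_filter, Finset.mem_univ, true_and, Set.mem_setOf_eq, hA]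
    constructor
    · rintro ⟨γ', ⟨h1, h2, h3⟩, rfl⟩
      exact ⟨h3, (exists_addable_iff s lam _ i).1 ⟨γ', h1, h2, rfl⟩⟩
    · rintro ⟨hP, hG⟩
      obtain ⟨γ', h1, h2, h3⟩ := (exists_addable_iff s lam c i).2 hG
      exact ⟨γ', ⟨h1, h2, h3 ▸ hP⟩, h3⟩
  rw [hA] at hinj himg ⊢
  rw [← Set.ncard_coe_finset, ← himg, Set.ncard_image_of_injOn hinj]

lemma ncard_removable_eq {l : ℕ} (s : Fin l → ℤ) (lam : Fin l → PartitionSeq) (i : ℤ)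
    (P : Fin l → Prop) [DecidablePred P] :
    {γ' : ℕ × ℕ × Fin l | Removable lam γ' ∧ content s γ' = i ∧ P γ'.2.2}.ncard =
      (Finset.univ.filter (fun c : Fin l =>
        P c ∧ ¬ Grange (lam c) (i - s c) ∧ Grange (lam c) (i + 1 - s c))).card := by
  set A := {γ' : ℕ × ℕ × Fin l | Removable lam γ' ∧ content s γ' = i ∧ P γ'.2.2} with hA
  have hinj : Set.InjOn (fun γ' : ℕ × ℕ × Fin l => γ'.2.2) A := by
    intro x hx y hy hxy
    exact removable_unique s lam hx.1 hy.1 (hx.2.1.trans hy.2.1.symm) hxy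
  have himg : (fun γ' : ℕ × ℕ × Fin l => γ'.2.2) '' A = ↑(Finset.univ.filter (fun c : Fin l =>
      P c ∧ ¬ Grange (lam c) (i - s c) ∧ Grange (lam c) (i + 1 - s c))) := by
    ext c
    simp only [Set.mem_image, Finset.coe_filter, Finset.mem_univ, true_and, Set.mem_setOf_eq, hA]
    constructor
    · rintro ⟨γ', ⟨h1, h2, h3⟩, rfl⟩
      exact ⟨h3, (exists_removable_iff s lam _ i).1 ⟨γ', h1, h2, rfl⟩⟩
    · rintro ⟨hP, hG⟩
      obtain ⟨γ', h1, h2, h3⟩ := (exists_removable_iff s lam c i).2 hG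
      exact ⟨γ', ⟨h1, h2, h3 ▸ hP⟩, h3⟩
  rw [hA] at hinj himg ⊢
  rw [← Set.ncard_coe_finset, ← himg, Set.ncard_image_of_injOn hinj]

lemma zpow_finset_sum {M₀ : Type*} [CommGroupWithZero M₀] (x : M₀) (hx : x ≠ 0)
    {ι : Type*} (t : Finset ι) (f : ι → ℤ) :
    x ^ (∑ j ∈ t, f j) = ∏ j ∈ t, x ^ f j := by
  induction t using Finset.cons_induction with
  | empty => simp
  | cons a t ha ih => rw [Finset.sum_cons, Finset.prod_cons, zpow_add₀ hx, ih]

lemma sum_eps {ι : Type*} (t : Finset ι) (A R : ι → Prop) (hAR : ∀ j, ¬ (A j ∧ R j)) :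
    ∑ j ∈ t, (if A j then (1 : ℤ) else if R j then -1 else 0) =
      ((t.filter A).card : ℤ) - ((t.filter R).card : ℤ) := by
  have hcongr : ∀ j ∈ t, (if A j then (1 : ℤ) else if R j then -1 else 0) =
      (if A j then (1 : ℤ) else 0) - (if R j then (1 : ℤ) else 0) := by
    intro j _
    by_cases hA : A j
    · have : ¬ R j := fun hR => hAR j ⟨hA, hR⟩
      simp [hA, this]
    · by_cases hR : R j <;> simp [hA, hR]
  rw [Finset.sum_congr rfl hcongr, Finset.sum_sub_distrib]
  simp [Finset.sum_boole]

variable {l : ℕ} {s : Fin l → ℤ}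

lemma LSymbol.ext' {S T : LSymbol l s} (h : S.β = T.β) : S = T := by
  cases S; cases T; simpa using h

lemma LSymbol.gap (S : LSymbol l s) (k : Fin l) (j j' : {j : ℤ // j ≤ s k})
    (h : j.val ≤ j'.val) : j'.val - j.val ≤ S.β k j' - S.β k j := by
  obtain ⟨v, hv⟩ := j
  obtain ⟨w, hw⟩ := j'
  simp only at h ⊢
  have key : ∀ d : ℕ, ∀ hm : v + (d : ℤ) ≤ s k, S.β k ⟨v, hv⟩ + d ≤ S.β k ⟨v + d, hm⟩ := by
    intro d
    induction d with
    | zero =>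
      intro hm
      have he : (⟨v + ((0 : ℕ) : ℤ), hm⟩ : {j : ℤ // j ≤ s k}) = ⟨v, hv⟩ :=
        Subtype.ext (by push_cast; ring)
      rw [he]
      simp
    | succ d ih =>
      intro hm
      have hm' : v + (d : ℤ) ≤ s k := by push_cast at hm; omega
      have h1 := ih hm'
      have h2 : S.β k ⟨v + (d : ℤ), hm'⟩ < S.β k ⟨v + ((d + 1 : ℕ) : ℤ), hm⟩ :=
        S.strict k (Subtype.mk_lt_mk.2 (by push_cast; omega))
      push_cast at h2 ⊢
      omega
  have hd : v + (((w - v).toNat : ℕ) : ℤ) = w := by omega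
  have h5 := key (w - v).toNat (by omega)
  have h6 : S.β k ⟨v + (((w - v).toNat : ℕ) : ℤ), by omega⟩ = S.β k ⟨w, hw⟩ :=
    congrArg (S.β k) (Subtype.ext hd)
  rw [h6] at h5
  omega

lemma LSymbol.le_beta (S : LSymbol l s) (k : Fin l) (j : {j : ℤ // j ≤ s k}) :
    j.val ≤ S.β k j := by
  obtain ⟨N, hN⟩ := S.lower k
  have hm : min N j.val ≤ s k := le_trans (min_le_right _ _) j.2
  have h1 : S.β k ⟨min N j.val, hm⟩ = min N j.val := hN ⟨min N j.val, hm⟩ (min_le_left _ _)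
  have h2 := LSymbol.gap S k ⟨min N j.val, hm⟩ j (min_le_right _ _)
  simp only at h2
  omega

/-- The `l`-partition associated to an `l`-symbol. -/
def lamS (S : LSymbol l s) : Fin l → PartitionSeq := fun k =>
  { part := fun n => (S.β k ⟨s k - n, sub_le_self _ (Int.natCast_nonneg n)⟩ - (s k - n)).toNat
    antitone := by
      intro m n hmn
      have h := LSymbol.gap S k ⟨s k - n, by omega⟩ ⟨s k - m, by omega⟩ (by simp; omega)
      simp only at h
      omega
    eventually_zero := by
      obtain ⟨N, hN⟩ := S.lower k
      refine ⟨(s k - N).toNat, fun n hn => ?_⟩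
      have h1 : s k - (n : ℤ) ≤ N := by omega
      rw [hN ⟨s k - n, by omega⟩ h1]
      simp }

lemma lamS_part_coe (S : LSymbol l s) (k : Fin l) (n : ℕ) :
    (((lamS S) k).part n : ℤ) = S.β k ⟨s k - n, sub_le_self _ (Int.natCast_nonneg n)⟩ - s k + n := by
  show ((S.β k ⟨s k - n, by omega⟩ - (s k - n)).toNat : ℤ) = _
  have := LSymbol.le_beta S k ⟨s k - n, by omega⟩
  simp only at this
  omega

lemma lamS_congr {S T : LSymbol l s} {k : Fin l} (h : T.β k = S.β k) :
    lamS T k = lamS S k := by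
  apply PartitionSeq.ext'
  intro n
  show (T.β k _ - _).toNat = (S.β k _ - _).toNat
  rw [h]

/-- The `l`-symbol associated to an `l`-partition. -/
def symOf (lam : Fin l → PartitionSeq) : LSymbol l s where
  β k j := ((lam k).part (s k - j.val).toNat : ℤ) + j.val
  strict k := by
    intro j j' hjj'
    dsimp only
    have hv : j.val < j'.val := hjj'
    have h2 := j'.2
    have hn : (s k - j'.val).toNat ≤ (s k - j.val).toNat := by omega
    have hp := (lam k).antitone _ _ hn
    omega
  lower k := by
    obtain ⟨N0, hN0⟩ := (lam k).eventually_zero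
    refine ⟨s k - N0, fun j hj => ?_⟩
    have h2 : N0 ≤ (s k - j.val).toNat := by omega
    simp [hN0 _ h2]

lemma beta_anchor (S : LSymbol l s) (k : Fin l) (j : {j : ℤ // j ≤ s k}) :
    S.β k ⟨s k - (((s k - j.val).toNat : ℕ) : ℤ), by omega⟩ = S.β k j :=
  congrArg (S.β k) (Subtype.ext (by have := j.2; simp only; omega))

lemma symOf_lamS (S : LSymbol l s) : symOf (lamS S) = S := by
  apply LSymbol.ext'
  funext k j
  show (((lamS S) k).part (s k - j.val).toNat : ℤ) + j.val = S.β k j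
  have h3 := lamS_part_coe S k ((s k - j.val).toNat)
  rw [beta_anchor S k j] at h3
  have h2 := j.2
  omega

lemma lamS_symOf (lam : Fin l → PartitionSeq) : lamS (symOf (s := s) lam) = lam := by
  funext k
  apply PartitionSeq.ext'
  intro n
  show ((((lam k).part ((s k - (s k - (n : ℤ))).toNat) : ℤ) + (s k - (n : ℤ)))
      - (s k - (n : ℤ))).toNat = (lam k).part n
  have h1 : (s k - (s k - (n : ℤ))).toNat = n := by omega
  rw [h1]
  omega

/-- The bijection between `l`-symbols and `l`-partitions. -/
def symEquiv : LSymbol l s ≃ (Fin l → PartitionSeq) :=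
  ⟨lamS, symOf, symOf_lamS, lamS_symOf⟩

lemma grange_lamS (S : LSymbol l s) (k : Fin l) (x : ℤ) :
    Grange ((lamS S) k) x ↔ inRow S k (x + s k) := by
  constructor
  · rintro ⟨n, hn⟩
    rw [lamS_part_coe] at hn
    exact ⟨⟨s k - n, by omega⟩, by omega⟩
  · rintro ⟨j, hj⟩
    refine ⟨(s k - j.val).toNat, ?_⟩
    have h3 := lamS_part_coe S k ((s k - j.val).toNat)
    rw [beta_anchor S k j] at h3
    have h2 := j.2
    omega

/-- Replace the entry `i` by `i + 1` in row `k` of the symbol `S`. -/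
def upSym (S : LSymbol l s) (k : Fin l) (i : ℤ)
    (hA : inRow S k i ∧ ¬ inRow S k (i + 1)) : LSymbol l s where
  β k' j := if k' = k ∧ S.β k' j = i then i + 1 else S.β k' j
  strict k' := by
    intro j j' hjj
    dsimp only
    have h1 : S.β k' j < S.β k' j' := S.strict k' hjj
    by_cases hk : k' = k
    · subst hk
      by_cases e1 : S.β k' j = i
      · rw [if_pos ⟨rfl, e1⟩]
        have e2 : ¬ (k' = k' ∧ S.β k' j' = i) := fun h => by omega
        rw [if_neg e2]
        have e3 : S.β k' j' ≠ i + 1 := fun hc => hA.2 ⟨j', hc⟩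
        omega
      · rw [if_neg (fun h => e1 h.2)]
        by_cases e2 : S.β k' j' = i
        · rw [if_pos ⟨rfl, e2⟩]; omega
        · rw [if_neg (fun h => e2 h.2)]; omega
    · rw [if_neg (fun h => hk h.1), if_neg (fun h => hk h.1)]; exact h1
  lower k' := by
    obtain ⟨N, hN⟩ := S.lower k'
    refine ⟨min N (i - 1), fun j hj => ?_⟩
    have h1 : S.β k' j = j.val := hN j (le_trans hj (min_le_left _ _))
    have h2 : ¬ (k' = k ∧ S.β k' j = i) := fun h => by omega
    rw [if_neg h2, h1]

lemma upSym_spec₁ (S : LSymbol l s) (k : Fin l) (i : ℤ)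
    (hA : inRow S k i ∧ ¬ inRow S k (i + 1)) :
    ∀ k' : Fin l, k' ≠ k → (upSym S k i hA).β k' = S.β k' := by
  intro k' hk'
  funext j
  show (if _ ∧ _ then _ else _) = _
  rw [if_neg (fun h => hk' h.1)]

lemma upSym_spec₂ (S : LSymbol l s) (k : Fin l) (i : ℤ)
    (hA : inRow S k i ∧ ¬ inRow S k (i + 1)) :
    ∀ j, (upSym S k i hA).β k j = if S.β k j = i then i + 1 else S.β k j := by
  intro j
  show (if _ ∧ _ then _ else _) = _
  by_cases e : S.β k j = i
  · rw [if_pos ⟨rfl, e⟩, if_pos e]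
  · rw [if_neg (fun h => e h.2), if_neg e]

/-- Replace the entry `i + 1` by `i` in row `k` of the symbol `S`. -/
def downSym (S : LSymbol l s) (k : Fin l) (i : ℤ)
    (hR : inRow S k (i + 1) ∧ ¬ inRow S k i) : LSymbol l s where
  β k' j := if k' = k ∧ S.β k' j = i + 1 then i else S.β k' j
  strict k' := by
    intro j j' hjj
    dsimp only
    have h1 : S.β k' j < S.β k' j' := S.strict k' hjj
    by_cases hk : k' = k
    · subst hk
      by_cases e1 : S.β k' j = i + 1
      · rw [if_pos ⟨rfl, e1⟩]
        have e2 : ¬ (k' = k' ∧ S.β k' j' = i + 1) := fun h => by omega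
        rw [if_neg e2]
        omega
      · rw [if_neg (fun h => e1 h.2)]
        by_cases e2 : S.β k' j' = i + 1
        · rw [if_pos ⟨rfl, e2⟩]
          have e3 : S.β k' j ≠ i := fun hc => hR.2 ⟨j, hc⟩
          omega
        · rw [if_neg (fun h => e2 h.2)]; omega
    · rw [if_neg (fun h => hk h.1), if_neg (fun h => hk h.1)]; exact h1
  lower k' := by
    obtain ⟨N, hN⟩ := S.lower k'
    refine ⟨min N (i - 1), fun j hj => ?_⟩
    have h1 : S.β k' j = j.val := hN j (le_trans hj (min_le_left _ _))
    have h2 : ¬ (k' = k ∧ S.β k' j = i + 1) := fun h => by omega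
    rw [if_neg h2, h1]

lemma downSym_spec₁ (S : LSymbol l s) (k : Fin l) (i : ℤ)
    (hR : inRow S k (i + 1) ∧ ¬ inRow S k i) :
    ∀ k' : Fin l, k' ≠ k → (downSym S k i hR).β k' = S.β k' := by
  intro k' hk'
  funext j
  show (if _ ∧ _ then _ else _) = _
  rw [if_neg (fun h => hk' h.1)]

lemma downSym_spec₂ (S : LSymbol l s) (k : Fin l) (i : ℤ)
    (hR : inRow S k (i + 1) ∧ ¬ inRow S k i) :
    ∀ j, (downSym S k i hR).β k j = if S.β k j = i + 1 then i else S.β k j := by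
  intro j
  show (if _ ∧ _ then _ else _) = _
  by_cases e : S.β k j = i + 1
  · rw [if_pos ⟨rfl, e⟩, if_pos e]
  · rw [if_neg (fun h => e h.2), if_neg e]

lemma downSym_inRow (S : LSymbol l s) (k : Fin l) (i : ℤ)
    (hR : inRow S k (i + 1) ∧ ¬ inRow S k i) :
    inRow (downSym S k i hR) k i ∧ ¬ inRow (downSym S k i hR) k (i + 1) := by
  constructor
  · obtain ⟨j0, hj0⟩ := hR.1
    exact ⟨j0, by rw [downSym_spec₂ S k i hR j0, if_pos hj0]⟩
  · rintro ⟨j, hj⟩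
    rw [downSym_spec₂ S k i hR j] at hj
    by_cases e : S.β k j = i + 1
    · rw [if_pos e] at hj; omega
    · rw [if_neg e] at hj; exact e hj

lemma upSym_downSym (S : LSymbol l s) (k : Fin l) (i : ℤ)
    (hR : inRow S k (i + 1) ∧ ¬ inRow S k i) :
    upSym (downSym S k i hR) k i (downSym_inRow S k i hR) = S := by
  apply LSymbol.ext'
  funext k' j
  show (if k' = k ∧ (if k' = k ∧ S.β k' j = i + 1 then i else S.β k' j) = i then i + 1
      else (if k' = k ∧ S.β k' j = i + 1 then i else S.β k' j)) = S.β k' j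
  by_cases hk : k' = k
  · subst hk
    by_cases e : S.β k' j = i + 1
    · rw [show (if k' = k' ∧ S.β k' j = i + 1 then i else S.β k' j) = i from if_pos ⟨rfl, e⟩,
        if_pos ⟨rfl, rfl⟩]
      omega
    · have hne : S.β k' j ≠ i := fun h => hR.2 ⟨j, h⟩
      rw [show (if k' = k' ∧ S.β k' j = i + 1 then i else S.β k' j) = S.β k' j from
        if_neg (fun h => e h.2), if_neg (fun h => hne h.2)]
  · rw [if_neg (fun h => hk h.1), if_neg (fun h => hk h.1)]

lemma symT_unique {S T T' : LSymbol l s} {k : Fin l} {v : {j : ℤ // j ≤ s k} → ℤ}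
    (h1 : ∀ k' : Fin l, k' ≠ k → T.β k' = S.β k') (h2 : ∀ j, T.β k j = v j)
    (h1' : ∀ k' : Fin l, k' ≠ k → T'.β k' = S.β k') (h2' : ∀ j, T'.β k j = v j) :
    T = T' := by
  apply LSymbol.ext'
  funext k'
  by_cases hk : k' = k
  · subst hk; funext j; rw [h2 j, h2' j]
  · rw [h1 k' hk, h1' k' hk]

lemma addpair_upSym (S : LSymbol l s) (k : Fin l) (i : ℤ)
    (hA : inRow S k i ∧ ¬ inRow S k (i + 1)) :
    ∃ γ : ℕ × ℕ × Fin l, γ.2.2 = k ∧ content s γ = i ∧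
      AddPair (lamS S) γ (lamS (upSym S k i hA)) := by
  have hG : Grange ((lamS S) k) (i - s k) ∧ ¬ Grange ((lamS S) k) (i + 1 - s k) := by
    rw [grange_lamS, grange_lamS, sub_add_cancel, sub_add_cancel]
    exact hA
  obtain ⟨⟨a, b, c⟩, hAdd, hcont, hck⟩ := (exists_addable_iff s (lamS S) k i).2 hG
  obtain rfl : c = k := hck
  obtain ⟨ha, hb, hcond⟩ := (addable_char (lamS S) a b c).1 hAdd
  refine ⟨(a, b, c), rfl, hcont, (addPair_iff _ _ a b c).2 ⟨ha, hb, hcond, ?_⟩⟩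
  have hcont' : (b : ℤ) - a + s c = i := hcont
  have hpart := lamS_part_coe S c (a - 1)
  have hkey : S.β c ⟨s c - ((a - 1 : ℕ) : ℤ), by omega⟩ = i := by omega
  funext c'
  by_cases hc' : c' = c
  · subst hc'
    rw [Function.update_self]
    apply PartitionSeq.ext'
    intro n
    show (lamS (upSym S c' i hA) c').part n =
      if n = a - 1 ∧ (a - 1 = 0 ∨ (lamS S c').part (a - 1) < (lamS S c').part (a - 1 - 1))
      then (lamS S c').part (a - 1) + 1 else (lamS S c').part n
    by_cases hn : n = a - 1
    · subst hn
      rw [if_pos ⟨rfl, by simp only [show a - 1 - 1 = a - 2 by omega]; omega⟩]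
      have h1 := lamS_part_coe (upSym S c' i hA) c' (a - 1)
      have h2 := upSym_spec₂ S c' i hA ⟨s c' - ((a - 1 : ℕ) : ℤ), by omega⟩
      rw [if_pos hkey] at h2
      rw [h2] at h1
      omega
    · rw [if_neg (fun h => hn h.1)]
      have h1 := lamS_part_coe (upSym S c' i hA) c' n
      have h2 := upSym_spec₂ S c' i hA ⟨s c' - (n : ℤ), by omega⟩
      have hne : S.β c' ⟨s c' - (n : ℤ), by omega⟩ ≠ i := by
        intro he
        have hinj := (S.strict c').injective (he.trans hkey.symm)
        apply hn
        have hv := congrArg Subtype.val hinj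
        simp only at hv
        omega
      rw [if_neg hne] at h2
      rw [h2] at h1
      have h3 := lamS_part_coe S c' n
      omega
  · rw [Function.update_of_ne hc']
    exact lamS_congr (upSym_spec₁ S c i hA c' hc')

lemma addpair_downSym (S : LSymbol l s) (k : Fin l) (i : ℤ)
    (hR : inRow S k (i + 1) ∧ ¬ inRow S k i) :
    ∃ γ : ℕ × ℕ × Fin l, γ.2.2 = k ∧ content s γ = i ∧
      AddPair (lamS (downSym S k i hR)) γ (lamS S) := by
  obtain ⟨γ, h1, h2, h3⟩ :=
    addpair_upSym (downSym S k i hR) k i (downSym_inRow S k i hR)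
  rw [upSym_downSym S k i hR] at h3
  exact ⟨γ, h1, h2, h3⟩

lemma fockF_pair_unique (lam : Fin l → PartitionSeq) (c : Fin l) (i : ℤ)
    {p q : (ℕ × ℕ × Fin l) × (Fin l → PartitionSeq)}
    (hp : p.1.2.2 = c ∧ content s p.1 = i ∧ p.1 ∉ YDiag lam ∧
      YDiag p.2 = insert p.1 (YDiag lam))
    (hq : q.1.2.2 = c ∧ content s q.1 = i ∧ q.1 ∉ YDiag lam ∧
      YDiag q.2 = insert q.1 (YDiag lam)) : p = q := by
  have hA1 : Addable lam p.1 := ⟨hp.2.2.1, p.2, hp.2.2.2⟩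
  have hA2 : Addable lam q.1 := ⟨hq.2.2.1, q.2, hq.2.2.2⟩
  have h1 : p.1 = q.1 := addable_unique s lam hA1 hA2 (hp.2.1.trans hq.2.1.symm)
    (hp.1.trans hq.1.symm)
  have h2 : p.2 = q.2 := YDiag_inj (hp.2.2.2.trans (by rw [h1, ← hq.2.2.2]))
  exact Prod.ext h1 h2

lemma fockE_pair_unique (lam : Fin l → PartitionSeq) (c : Fin l) (i : ℤ)
    {p q : (ℕ × ℕ × Fin l) × (Fin l → PartitionSeq)}
    (hp : p.1.2.2 = c ∧ content s p.1 = i ∧ p.1 ∉ YDiag p.2 ∧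
      YDiag lam = insert p.1 (YDiag p.2))
    (hq : q.1.2.2 = c ∧ content s q.1 = i ∧ q.1 ∉ YDiag q.2 ∧
      YDiag lam = insert q.1 (YDiag q.2)) : p = q := by
  have hR1 : Removable lam p.1 :=
    (removable_iff_addpair lam p.1).2 ⟨p.2, hp.2.2.1, hp.2.2.2⟩
  have hR2 : Removable lam q.1 :=
    (removable_iff_addpair lam q.1).2 ⟨q.2, hq.2.2.1, hq.2.2.2⟩
  have h1 : p.1 = q.1 := removable_unique s lam hR1 hR2 (hp.2.1.trans hq.2.1.symm)
    (hp.1.trans hq.1.symm)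
  have hd1 : YDiag p.2 = YDiag lam \ {p.1} := by
    rw [hp.2.2.2, Set.insert_diff_self_of_notMem hp.2.2.1]
  have hd2 : YDiag q.2 = YDiag lam \ {q.1} := by
    rw [hq.2.2.2, Set.insert_diff_self_of_notMem hq.2.2.1]
  have h2 : p.2 = q.2 := YDiag_inj (hd1.trans (by rw [h1, ← hd2]))
  exact Prod.ext h1 h2

lemma Nval (lam : Fin l → PartitionSeq) (S : LSymbol l s) (i : ℤ) (P : Fin l → Prop)
    [DecidablePred P] (hcomp : ∀ c, P c → lam c = (lamS S) c) :
    ({γ' : ℕ × ℕ × Fin l | Addable lam γ' ∧ content s γ' = i ∧ P γ'.2.2}.ncard : ℤ) -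
      ({γ' : ℕ × ℕ × Fin l | Removable lam γ' ∧ content s γ' = i ∧ P γ'.2.2}.ncard : ℤ) =
    ((Finset.univ.filter (fun c : Fin l =>
        P c ∧ inRow S c i ∧ ¬ inRow S c (i + 1))).card : ℤ) -
      ((Finset.univ.filter (fun c : Fin l =>
        P c ∧ ¬ inRow S c i ∧ inRow S c (i + 1))).card : ℤ) := by
  rw [ncard_addable_eq, ncard_removable_eq]
  have h1 : ∀ c : Fin l, (P c ∧ Grange (lam c) (i - s c) ∧ ¬ Grange (lam c) (i + 1 - s c)) ↔
      (P c ∧ inRow S c i ∧ ¬ inRow S c (i + 1)) := by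
    intro c
    by_cases hP : P c
    · rw [hcomp c hP]
      have g1 := grange_lamS S c (i - s c)
      rw [sub_add_cancel] at g1
      have g2 := grange_lamS S c (i + 1 - s c)
      rw [sub_add_cancel] at g2
      rw [g1, g2]
    · simp [hP]
  have h2 : ∀ c : Fin l, (P c ∧ ¬ Grange (lam c) (i - s c) ∧ Grange (lam c) (i + 1 - s c)) ↔
      (P c ∧ ¬ inRow S c i ∧ inRow S c (i + 1)) := by
    intro c
    by_cases hP : P c
    · rw [hcomp c hP]
      have g1 := grange_lamS S c (i - s c)
      rw [sub_add_cancel] at g1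
      have g2 := grange_lamS S c (i + 1 - s c)
      rw [sub_add_cancel] at g2
      rw [g1, g2]
    · simp [hP]
  simp only [h1, h2]

noncomputable def epsK (S : LSymbol l s) (i : ℤ) (c : Fin l) : ℤ :=
  if inRow S c i ∧ ¬ inRow S c (i + 1) then 1
  else if ¬ inRow S c i ∧ inRow S c (i + 1) then -1 else 0

lemma epsK_eq (S : LSymbol l s) (i : ℤ) (c : Fin l) :
    epsK S i c = (if inRow S c i ∧ ¬ inRow S c (i + 1) then (1 : ℤ) else 0) -
      (if ¬ inRow S c i ∧ inRow S c (i + 1) then (1 : ℤ) else 0) := by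
  unfold epsK
  by_cases hA : inRow S c i ∧ ¬ inRow S c (i + 1)
  · have hR : ¬ (¬ inRow S c i ∧ inRow S c (i + 1)) := fun h => h.1 hA.1
    rw [if_pos hA, if_pos hA, if_neg hR]
    ring
  · rw [if_neg hA, if_neg hA]
    by_cases hR : ¬ inRow S c i ∧ inRow S c (i + 1)
    · rw [if_pos hR, if_pos hR]
      ring
    · rw [if_neg hR, if_neg hR]
      ring

lemma prod_Kcoef (S : LSymbol l s) (i : ℤ) (P : Fin l → Prop) [DecidablePred P] :
    ∏ c ∈ Finset.univ.filter (fun c : Fin l => P c), KcoefS i S c =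
      (RatFunc.X : RatFunc ℚ) ^
        (((Finset.univ.filter (fun c : Fin l =>
            P c ∧ (inRow S c i ∧ ¬ inRow S c (i + 1)))).card : ℤ) -
          ((Finset.univ.filter (fun c : Fin l =>
            P c ∧ (¬ inRow S c i ∧ inRow S c (i + 1)))).card : ℤ)) := by
  have hK : ∀ c : Fin l, KcoefS i S c = (RatFunc.X : RatFunc ℚ) ^ epsK S i c := by
    intro c
    unfold KcoefS epsK
    by_cases hA : inRow S c i ∧ ¬ inRow S c (i + 1)
    · rw [if_pos hA, if_pos hA, zpow_one]
    · rw [if_neg hA, if_neg hA]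
      by_cases hR : ¬ inRow S c i ∧ inRow S c (i + 1)
      · rw [if_pos hR, if_pos hR, zpow_neg, zpow_one]
      · rw [if_neg hR, if_neg hR, zpow_zero]
  rw [Finset.prod_congr rfl (fun c _ => hK c), ← zpow_finset_sum _ RatFunc.X_ne_zero]
  congr 1
  rw [Finset.sum_congr rfl (fun c _ => epsK_eq S i c), Finset.sum_sub_distrib]
  rw [Finset.sum_boole, Finset.sum_boole, Finset.filter_filter, Finset.filter_filter]

lemma domLCongr_single_lamS (S : LSymbol l s) (r : RatFunc ℚ) :
    (Finsupp.domLCongr (symEquiv (l := l) (s := s)) :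
        (LSymbol l s →₀ RatFunc ℚ) ≃ₗ[RatFunc ℚ] ((Fin l → PartitionSeq) →₀ RatFunc ℚ))
      (Finsupp.single S r) = Finsupp.single (lamS S) r := by
  rw [Finsupp.domLCongr_single]
  rfl

lemma interK (i : ℤ) :
    (Finsupp.domLCongr (symEquiv (l := l) (s := s)) :
        (LSymbol l s →₀ RatFunc ℚ) ≃ₗ[RatFunc ℚ] _).toLinearMap ∘ₗ SymK l s i =
      FockK l s i ∘ₗ (Finsupp.domLCongr symEquiv).toLinearMap := by
  apply Finsupp.lhom_ext
  intro S r
  simp only [LinearMap.comp_apply, LinearEquiv.coe_coe]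
  rw [domLCongr_single_lamS]
  simp only [SymK, FockK]
  rw [Finsupp.lsum_single, Finsupp.lsum_single, LinearMap.smul_apply, LinearMap.smul_apply,
    Finsupp.lsingle_apply, Finsupp.lsingle_apply, map_smul, domLCongr_single_lamS]
  congr 1
  have hp := prod_Kcoef S i (fun _ => True)
  simp only [Finset.filter_true, true_and] at hp
  have hn := Nval (lamS S) S i (fun _ => True) (fun _ _ => rfl)
  simp only [and_true, true_and] at hn
  rw [hp]
  congr 1
  unfold Ntot
  rw [← hn]

lemma interF (i : ℤ) :
    (Finsupp.domLCongr (symEquiv (l := l) (s := s)) :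
        (LSymbol l s →₀ RatFunc ℚ) ≃ₗ[RatFunc ℚ] _).toLinearMap ∘ₗ SymF l s i =
      FockF l s i ∘ₗ (Finsupp.domLCongr symEquiv).toLinearMap := by
  apply Finsupp.lhom_ext
  intro S r
  simp only [LinearMap.comp_apply, LinearEquiv.coe_coe]
  rw [domLCongr_single_lamS]
  simp only [SymF, FockF]
  rw [Finsupp.lsum_single, Finsupp.lsum_single, LinearMap.sum_apply, LinearMap.sum_apply,
    map_sum]
  refine Finset.sum_congr rfl (fun c _ => ?_)
  by_cases hF : ∃ p : (ℕ × ℕ × Fin l) × (Fin l → PartitionSeq),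
      p.1.2.2 = c ∧ content s p.1 = i ∧ p.1 ∉ YDiag (lamS S) ∧
        YDiag p.2 = insert p.1 (YDiag (lamS S))
  · have hA : inRow S c i ∧ ¬ inRow S c (i + 1) := by
      obtain ⟨p, h1, h2, h3, h4⟩ := hF
      have hg := (exists_addable_iff s (lamS S) c i).1 ⟨p.1, ⟨h3, p.2, h4⟩, h2, h1⟩
      rw [grange_lamS, grange_lamS, sub_add_cancel, sub_add_cancel] at hg
      exact hg
    obtain ⟨γ0, hγk, hγc, hAP⟩ := addpair_upSym S c i hA
    have hS : (inRow S c i ∧ ¬ inRow S c (i + 1)) ∧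
        ∃ T : LSymbol l s, (∀ k' : Fin l, k' ≠ c → T.β k' = S.β k') ∧
          ∀ j, T.β c j = if S.β c j = i then i + 1 else S.β c j :=
      ⟨hA, upSym S c i hA, upSym_spec₁ S c i hA, upSym_spec₂ S c i hA⟩
    rw [dif_pos hS, dif_pos hF]
    have hTc : hS.2.choose = upSym S c i hA :=
      symT_unique hS.2.choose_spec.1 hS.2.choose_spec.2
        (upSym_spec₁ S c i hA) (upSym_spec₂ S c i hA)
    have hpc : hF.choose = (γ0, lamS (upSym S c i hA)) :=
      fockF_pair_unique (lamS S) c i hF.choose_spec ⟨hγk, hγc, hAP.1, hAP.2⟩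
    rw [LinearMap.smul_apply, LinearMap.smul_apply, Finsupp.lsingle_apply,
      Finsupp.lsingle_apply, map_smul, hTc, hpc, domLCongr_single_lamS]
    congr 1
    have hp := prod_Kcoef S i (fun k' => c < k')
    have hn := Nval (lamS S) S i (fun k' => γ0.2.2 < k') (fun _ _ => rfl)
    rw [hγk] at hn
    rw [hp]
    congr 1
    unfold Nsucc
    rw [hγk, ← hn]
  · have hS : ¬ ((inRow S c i ∧ ¬ inRow S c (i + 1)) ∧
        ∃ T : LSymbol l s, (∀ k' : Fin l, k' ≠ c → T.β k' = S.β k') ∧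
          ∀ j, T.β c j = if S.β c j = i then i + 1 else S.β c j) := by
      intro hS
      apply hF
      obtain ⟨γ0, hγk, hγc, hAP⟩ := addpair_upSym S c i hS.1
      exact ⟨(γ0, lamS (upSym S c i hS.1)), hγk, hγc, hAP.1, hAP.2⟩
    rw [dif_neg hS, dif_neg hF]
    simp

lemma interE (i : ℤ) :
    (Finsupp.domLCongr (symEquiv (l := l) (s := s)) :
        (LSymbol l s →₀ RatFunc ℚ) ≃ₗ[RatFunc ℚ] _).toLinearMap ∘ₗ SymE l s i =
      FockE l s i ∘ₗ (Finsupp.domLCongr symEquiv).toLinearMap := by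
  apply Finsupp.lhom_ext
  intro S r
  simp only [LinearMap.comp_apply, LinearEquiv.coe_coe]
  rw [domLCongr_single_lamS]
  simp only [SymE, FockE]
  rw [Finsupp.lsum_single, Finsupp.lsum_single, LinearMap.sum_apply, LinearMap.sum_apply,
    map_sum]
  refine Finset.sum_congr rfl (fun c _ => ?_)
  by_cases hF : ∃ p : (ℕ × ℕ × Fin l) × (Fin l → PartitionSeq),
      p.1.2.2 = c ∧ content s p.1 = i ∧ p.1 ∉ YDiag p.2 ∧
        YDiag (lamS S) = insert p.1 (YDiag p.2)
  · have hR : inRow S c (i + 1) ∧ ¬ inRow S c i := by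
      obtain ⟨p, h1, h2, h3, h4⟩ := hF
      have hRem : Removable (lamS S) p.1 :=
        (removable_iff_addpair (lamS S) p.1).2 ⟨p.2, h3, h4⟩
      have hg := (exists_removable_iff s (lamS S) c i).1 ⟨p.1, hRem, h2, h1⟩
      rw [grange_lamS, grange_lamS, sub_add_cancel, sub_add_cancel] at hg
      exact ⟨hg.2, hg.1⟩
    obtain ⟨γ0, hγk, hγc, hAP⟩ := addpair_downSym S c i hR
    have hS : (inRow S c (i + 1) ∧ ¬ inRow S c i) ∧
        ∃ T : LSymbol l s, (∀ k' : Fin l, k' ≠ c → T.β k' = S.β k') ∧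
          ∀ j, T.β c j = if S.β c j = i + 1 then i else S.β c j :=
      ⟨hR, downSym S c i hR, downSym_spec₁ S c i hR, downSym_spec₂ S c i hR⟩
    rw [dif_pos hS, dif_pos hF]
    have hTc : hS.2.choose = downSym S c i hR :=
      symT_unique hS.2.choose_spec.1 hS.2.choose_spec.2
        (downSym_spec₁ S c i hR) (downSym_spec₂ S c i hR)
    have hpc : hF.choose = (γ0, lamS (downSym S c i hR)) :=
      fockE_pair_unique (lamS S) c i hF.choose_spec ⟨hγk, hγc, hAP.1, hAP.2⟩
    rw [LinearMap.smul_apply, LinearMap.smul_apply, Finsupp.lsingle_apply,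
      Finsupp.lsingle_apply, map_smul, hTc, hpc, domLCongr_single_lamS]
    congr 1
    have hp := prod_Kcoef S i (fun k' => k' < c)
    have hn := Nval (lamS (downSym S c i hR)) S i (fun k' => k' < γ0.2.2) ?hcomp
    case hcomp =>
      intro c' hc'
      rw [hγk] at hc'
      exact lamS_congr (downSym_spec₁ S c i hR c' (ne_of_lt hc'))
    rw [hγk] at hn
    rw [Finset.prod_inv_distrib, hp, ← zpow_neg]
    congr 1
    unfold Nprec
    rw [hγk, ← hn]
  · have hS : ¬ ((inRow S c (i + 1) ∧ ¬ inRow S c i) ∧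
        ∃ T : LSymbol l s, (∀ k' : Fin l, k' ≠ c → T.β k' = S.β k') ∧
          ∀ j, T.β c j = if S.β c j = i + 1 then i else S.β c j) := by
      intro hS
      apply hF
      obtain ⟨γ0, hγk, hγc, hAP⟩ := addpair_downSym S c i hS.1
      exact ⟨(γ0, lamS (downSym S c i hS.1)), hγk, hγc, hAP.1, hAP.2⟩
    rw [dif_neg hS, dif_neg hF]
    simp

end Comb


/-- the bijection `S ↦ λ_S` between `l`-symbols of charge `s` and
`l`-partitions induces an isomorphism of `U_q(sl_∞)`-modules between the tensor product
Fock space `F'_s = V(Λ_{s_1}) ⊗ ⋯ ⊗ V(Λ_{s_l})` and the combinatorial Fock space `F_s`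
with the Jimbo–Misra–Miwa–Okado action: a linear equivalence sending `v_S` to `|λ_S, s⟩`
and intertwining the operators `F_i`, `E_i` and `K_i` on both sides. -/
theorem stmt17 (l : ℕ) (s : Fin l → ℤ) :
    ∃ Φ : (LSymbol l s →₀ RatFunc ℚ) ≃ₗ[RatFunc ℚ]
        ((Fin l → PartitionSeq) →₀ RatFunc ℚ),
      (∀ S : LSymbol l s, ∃ mu : Fin l → PartitionSeq,
        (∀ (k : Fin l) (i : ℕ),
          ((mu k).part i : ℤ) = S.β k ⟨s k - (i : ℤ), by omega⟩ - s k + (i : ℤ)) ∧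
        Φ (Finsupp.single S 1) = Finsupp.single mu 1) ∧
      (∀ i : ℤ, Φ.toLinearMap ∘ₗ SymF l s i = FockF l s i ∘ₗ Φ.toLinearMap) ∧
      (∀ i : ℤ, Φ.toLinearMap ∘ₗ SymE l s i = FockE l s i ∘ₗ Φ.toLinearMap) ∧
      (∀ i : ℤ, Φ.toLinearMap ∘ₗ SymK l s i = FockK l s i ∘ₗ Φ.toLinearMap) := by
  refine ⟨Finsupp.domLCongr symEquiv, ?_, interF, interE, interK⟩
  intro S
  refine ⟨lamS S, fun k i => lamS_part_coe S k i, domLCongr_single_lamS S 1⟩
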